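/- Let D be a full pro-reflective subcategory of a category C and let J be a directed partially ordered set. Then, for every pair of objects P, Q of D, the following statements are equivalent: (i) P and Q are isomorphic objects of D (equivalently of C); (ii) P ≅ Q in the shape category Sh_{(C,D)}; (iii) P ≅ Q in the J-shape category Sh^J_{(C,D)}. -/

import Mathlib

open CategoryTheory

universe t w v u

/-- An inverse system in a category `C` over a directed preordered index type `Λ`:
objects `obj l` and bonding morphisms `bond : obj l' ⟶ obj l` for `l ≤ l'`. -/
structure InvSys (C : Type u) [Category.{v} C] (Λ : Type w) [Preorder Λ] where
  obj : Λ → C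
  bond : ∀ {l l' : Λ}, l ≤ l' → (obj l' ⟶ obj l)
  bond_refl : ∀ l : Λ, bond (le_refl l) = 𝟙 (obj l)
  bond_comp : ∀ {l l' l'' : Λ} (h : l ≤ l') (h' : l' ≤ l''),
    bond h' ≫ bond h = bond (h.trans h')

variable {C : Type u} [Category.{v} C]

/-- `(f, F)` is a `J`-morphism of inverse systems `X → Y`. -/
def IsJMor (J : Type t) [Preorder J] {Λ M : Type w} [Preorder Λ] [Preorder M]
    (X : InvSys C Λ) (Y : InvSys C M) (f : M → Λ)
    (F : ∀ μ : M, J → (X.obj (f μ) ⟶ Y.obj μ)) : Prop :=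
  ∀ ⦃μ μ' : M⦄ (h : μ ≤ μ'), ∃ (l : Λ) (hl : f μ ≤ l) (hl' : f μ' ≤ l) (j : J),
    ∀ j' : J, j ≤ j' →
      X.bond hl ≫ F μ j' = X.bond hl' ≫ F μ' j' ≫ Y.bond h

/-- `(f, F)` is a commutative `J`-morphism: the defining equality holds for every `j ∈ J`. -/
def IsCommJMor (J : Type t) [Preorder J] {Λ M : Type w} [Preorder Λ] [Preorder M]
    (X : InvSys C Λ) (Y : InvSys C M) (f : M → Λ)
    (F : ∀ μ : M, J → (X.obj (f μ) ⟶ Y.obj μ)) : Prop :=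
  ∀ ⦃μ μ' : M⦄ (h : μ ≤ μ'), ∃ (l : Λ) (hl : f μ ≤ l) (hl' : f μ' ≤ l),
    ∀ j : J, X.bond hl ≫ F μ j = X.bond hl' ≫ F μ' j ≫ Y.bond h

/-- A bundled `J`-morphism of inverse systems. -/
structure JMor (J : Type t) [Preorder J] {Λ M : Type w} [Preorder Λ] [Preorder M]
    (X : InvSys C Λ) (Y : InvSys C M) where
  idx : M → Λ
  app : ∀ μ : M, J → (X.obj (idx μ) ⟶ Y.obj μ)
  cond : IsJMor J X Y idx app

/-- The equivalence relation `∼` on `J`-morphisms `X → Y`. -/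
def JMorEquiv (J : Type t) [Preorder J] {Λ M : Type w} [Preorder Λ] [Preorder M]
    (X : InvSys C Λ) (Y : InvSys C M) (f g : JMor J X Y) : Prop :=
  ∀ μ : M, ∃ (l : Λ) (hl : f.idx μ ≤ l) (hl' : g.idx μ ≤ l) (j : J),
    ∀ j' : J, j ≤ j' → X.bond hl ≫ f.app μ j' = X.bond hl' ≫ g.app μ j'
/-- Composition of `J`-morphisms: `(f.comp g) = (f ∘ g, g_ν^j ∘ f_{g(ν)}^j)`. -/
def JMor.comp (J : Type t) [Preorder J] [IsDirected J (· ≤ ·)]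
    {Λ M N : Type w} [Preorder Λ] [IsDirected Λ (· ≤ ·)]
    [Preorder M] [IsDirected M (· ≤ ·)] [Preorder N]
    {X : InvSys C Λ} {Y : InvSys C M} {Z : InvSys C N}
    (f : JMor J X Y) (g : JMor J Y Z) : JMor J X Z where
  idx := f.idx ∘ g.idx
  app := fun ν j => f.app (g.idx ν) j ≫ g.app ν j
  cond := by
    intro ν ν' h
    obtain ⟨μ, hμ, hμ', j₀, e₀⟩ := g.cond h
    obtain ⟨l₁, h₁a, h₁b, j₁, e₁⟩ := f.cond hμ
    obtain ⟨l₂, h₂a, h₂b, j₂, e₂⟩ := f.cond hμ'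
    obtain ⟨l, hl₁, hl₂⟩ := directed_of (· ≤ ·) l₁ l₂
    obtain ⟨ja, hja₀, hja₁⟩ := directed_of (· ≤ ·) j₀ j₁
    obtain ⟨j, hj, hj₂⟩ := directed_of (· ≤ ·) ja j₂
    refine ⟨l, h₁a.trans hl₁, h₂a.trans hl₂, j, fun j' hj' => ?_⟩
    have E0 := e₀ j' ((hja₀.trans hj).trans hj')
    have E1 := e₁ j' ((hja₁.trans hj).trans hj')
    have E2 := e₂ j' (hj₂.trans hj')
    calc X.bond (h₁a.trans hl₁) ≫ f.app (g.idx ν) j' ≫ g.app ν j'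
        = X.bond hl₁ ≫ (X.bond h₁a ≫ f.app (g.idx ν) j') ≫ g.app ν j' := by
          rw [← X.bond_comp h₁a hl₁]; simp only [Category.assoc]
      _ = X.bond hl₁ ≫ (X.bond h₁b ≫ f.app μ j' ≫ Y.bond hμ) ≫ g.app ν j' := by rw [E1]
      _ = X.bond (h₁b.trans hl₁) ≫ f.app μ j' ≫ Y.bond hμ ≫ g.app ν j' := by
          rw [← X.bond_comp h₁b hl₁]; simp only [Category.assoc]
      _ = X.bond (h₂b.trans hl₂) ≫ f.app μ j' ≫ Y.bond hμ' ≫ g.app ν' j' ≫ Z.bond h := by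
          rw [E0]
      _ = X.bond hl₂ ≫ (X.bond h₂b ≫ f.app μ j' ≫ Y.bond hμ') ≫ g.app ν' j' ≫ Z.bond h := by
          rw [← X.bond_comp h₂b hl₂]; simp only [Category.assoc]
      _ = X.bond hl₂ ≫ (X.bond h₂a ≫ f.app (g.idx ν') j') ≫ g.app ν' j' ≫ Z.bond h := by
          rw [E2]
      _ = X.bond (h₂a.trans hl₂) ≫ (f.app (g.idx ν') j' ≫ g.app ν' j') ≫ Z.bond h := by
          rw [← X.bond_comp h₂a hl₂]; simp only [Category.assoc]

/-- The identity `J`-morphism. -/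
def JMor.id (J : Type t) [Preorder J] [Nonempty J] {Λ : Type w} [Preorder Λ]
    (X : InvSys C Λ) : JMor J X X where
  idx := _root_.id
  app := fun l _ => 𝟙 (X.obj l)
  cond := by
    intro l l' h
    exact ⟨l', h, le_refl _, Classical.arbitrary J, fun j _ => by
      simp [X.bond_refl]⟩

/-- The setoid of `J`-morphisms `X → Y` under the relation `∼`. -/
instance jmorSetoid (J : Type t) [Preorder J] [IsDirected J (· ≤ ·)] [Nonempty J]
    {Λ M : Type w} [Preorder Λ] [IsDirected Λ (· ≤ ·)] [Preorder M]
    (X : InvSys C Λ) (Y : InvSys C M) : Setoid (JMor J X Y) :=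
  ⟨JMorEquiv J X Y, by
    constructor
    · intro f μ
      exact ⟨f.idx μ, le_refl _, le_refl _, Classical.arbitrary J, fun j _ => rfl⟩
    · intro f g hfg μ
      obtain ⟨l, hl, hl', j, e⟩ := hfg μ
      exact ⟨l, hl', hl, j, fun j' hj => (e j' hj).symm⟩
    · intro f g k hfg hgk μ
      obtain ⟨l₁, h₁, h₁', j₁, e₁⟩ := hfg μ
      obtain ⟨l₂, h₂, h₂', j₂, e₂⟩ := hgk μ
      obtain ⟨l, hl₁, hl₂⟩ := directed_of (· ≤ ·) l₁ l₂
      obtain ⟨j, hj₁, hj₂⟩ := directed_of (· ≤ ·) j₁ j₂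
      refine ⟨l, h₁.trans hl₁, h₂'.trans hl₂, j, fun j' hj => ?_⟩
      calc X.bond (h₁.trans hl₁) ≫ f.app μ j'
          = X.bond hl₁ ≫ X.bond h₁ ≫ f.app μ j' := by
            rw [← Category.assoc, X.bond_comp]
        _ = X.bond hl₁ ≫ X.bond h₁' ≫ g.app μ j' := by rw [e₁ j' (hj₁.trans hj)]
        _ = X.bond (h₁'.trans hl₁) ≫ g.app μ j' := by
            rw [← Category.assoc, X.bond_comp]
        _ = X.bond hl₂ ≫ X.bond h₂ ≫ g.app μ j' := by
            rw [← Category.assoc, X.bond_comp]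
        _ = X.bond hl₂ ≫ X.bond h₂' ≫ k.app μ j' := by rw [e₂ j' (hj₂.trans hj)]
        _ = X.bond (h₂'.trans hl₂) ≫ k.app μ j' := by
            rw [← Category.assoc, X.bond_comp]⟩

/-- The relation `∼` is compatible with composition. -/
theorem jmorEquiv_comp_congr (J : Type t) [Preorder J] [IsDirected J (· ≤ ·)] [Nonempty J]
    {Λ M N : Type w} [Preorder Λ] [IsDirected Λ (· ≤ ·)]
    [Preorder M] [IsDirected M (· ≤ ·)] [Preorder N]
    {X : InvSys C Λ} {Y : InvSys C M} {Z : InvSys C N}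
    {f f' : JMor J X Y} {g g' : JMor J Y Z}
    (hf : JMorEquiv J X Y f f') (hg : JMorEquiv J Y Z g g') :
    JMorEquiv J X Z (JMor.comp J f g) (JMor.comp J f' g') := by
  refine (jmorSetoid J X Z).iseqv.trans (y := JMor.comp J f' g) ?_ ?_
  · -- f ∼ f' ⇒ f.comp g ∼ f'.comp g
    intro ν
    obtain ⟨l, hl, hl', j, e⟩ := hf (g.idx ν)
    exact ⟨l, hl, hl', j, fun j' hj => by
      show X.bond hl ≫ f.app (g.idx ν) j' ≫ g.app ν j'
          = X.bond hl' ≫ f'.app (g.idx ν) j' ≫ g.app ν j'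
      rw [← Category.assoc, e j' hj, Category.assoc]⟩
  · -- g ∼ g' ⇒ f'.comp g ∼ f'.comp g'
    intro ν
    obtain ⟨μ, hμ, hμ', j₁, e₁⟩ := hg ν
    obtain ⟨l₁, ha, hb, j₂, e₂⟩ := f'.cond hμ
    obtain ⟨l₂, hc, hd, j₃, e₃⟩ := f'.cond hμ'
    obtain ⟨l, hl₁, hl₂⟩ := directed_of (· ≤ ·) l₁ l₂
    obtain ⟨ja, hja₁, hja₂⟩ := directed_of (· ≤ ·) j₁ j₂
    obtain ⟨j, hj, hj₃⟩ := directed_of (· ≤ ·) ja j₃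
    refine ⟨l, ha.trans hl₁, hc.trans hl₂, j, fun j' hj' => ?_⟩
    have E1 := e₁ j' ((hja₁.trans hj).trans hj')
    have E2 := e₂ j' ((hja₂.trans hj).trans hj')
    have E3 := e₃ j' (hj₃.trans hj')
    show X.bond (ha.trans hl₁) ≫ f'.app (g.idx ν) j' ≫ g.app ν j'
        = X.bond (hc.trans hl₂) ≫ f'.app (g'.idx ν) j' ≫ g'.app ν j'
    calc X.bond (ha.trans hl₁) ≫ f'.app (g.idx ν) j' ≫ g.app ν j'
        = X.bond hl₁ ≫ (X.bond ha ≫ f'.app (g.idx ν) j') ≫ g.app ν j' := by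
          rw [← X.bond_comp ha hl₁]; simp only [Category.assoc]
      _ = X.bond hl₁ ≫ (X.bond hb ≫ f'.app μ j' ≫ Y.bond hμ) ≫ g.app ν j' := by rw [E2]
      _ = X.bond (hb.trans hl₁) ≫ f'.app μ j' ≫ Y.bond hμ ≫ g.app ν j' := by
          rw [← X.bond_comp hb hl₁]; simp only [Category.assoc]
      _ = X.bond (hd.trans hl₂) ≫ f'.app μ j' ≫ Y.bond hμ' ≫ g'.app ν j' := by rw [E1]
      _ = X.bond hl₂ ≫ (X.bond hd ≫ f'.app μ j' ≫ Y.bond hμ') ≫ g'.app ν j' := by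
          rw [← X.bond_comp hd hl₂]; simp only [Category.assoc]
      _ = X.bond hl₂ ≫ (X.bond hc ≫ f'.app (g'.idx ν) j') ≫ g'.app ν j' := by rw [E3]
      _ = X.bond (hc.trans hl₂) ≫ f'.app (g'.idx ν) j' ≫ g'.app ν j' := by
          rw [← X.bond_comp hc hl₂]; simp only [Category.assoc]

/-- The hom-set of the enriched pro-category `pro^J-C`. -/
def JHom (J : Type t) [Preorder J] [IsDirected J (· ≤ ·)] [Nonempty J]
    {Λ M : Type w} [Preorder Λ] [IsDirected Λ (· ≤ ·)] [Preorder M]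
    (X : InvSys C Λ) (Y : InvSys C M) :=
  Quotient (jmorSetoid J X Y)

/-- Composition in `pro^J-C` (diagrammatic order). -/
def JHom.comp (J : Type t) [Preorder J] [IsDirected J (· ≤ ·)] [Nonempty J]
    {Λ M N : Type w} [Preorder Λ] [IsDirected Λ (· ≤ ·)]
    [Preorder M] [IsDirected M (· ≤ ·)] [Preorder N]
    {X : InvSys C Λ} {Y : InvSys C M} {Z : InvSys C N}
    (f : JHom J X Y) (g : JHom J Y Z) : JHom J X Z :=
  Quotient.lift₂ (fun f g => (⟦JMor.comp J f g⟧ : JHom J X Z))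
    (fun _ _ _ _ hf hg => Quotient.sound (jmorEquiv_comp_congr J hf hg)) f g

/-- The identity morphism of `pro^J-C`. -/
def JHom.id (J : Type t) [Preorder J] [IsDirected J (· ≤ ·)] [Nonempty J]
    {Λ : Type w} [Preorder Λ] [IsDirected Λ (· ≤ ·)]
    (X : InvSys C Λ) : JHom J X X :=
  ⟦JMor.id J X⟧

/-- `f` is an isomorphism of `pro^J-C`. -/
def IsJIso (J : Type t) [Preorder J] [IsDirected J (· ≤ ·)] [Nonempty J]
    {Λ M : Type w} [Preorder Λ] [IsDirected Λ (· ≤ ·)]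
    [Preorder M] [IsDirected M (· ≤ ·)]
    {X : InvSys C Λ} {Y : InvSys C M} (f : JHom J X Y) : Prop :=
  ∃ g : JHom J Y X, JHom.comp J f g = JHom.id J X ∧ JHom.comp J g f = JHom.id J Y

/-- `X` and `Y` are isomorphic objects of `pro^J-C`. -/
def JIso (J : Type t) [Preorder J] [IsDirected J (· ≤ ·)] [Nonempty J]
    {Λ M : Type w} [Preorder Λ] [IsDirected Λ (· ≤ ·)]
    [Preorder M] [IsDirected M (· ≤ ·)]
    (X : InvSys C Λ) (Y : InvSys C M) : Prop :=
  ∃ f : JHom J X Y, IsJIso J f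
/-- The rudimentary inverse system associated with an object `X` of `C`. -/
def rud (X : C) : InvSys C PUnit.{w + 1} where
  obj _ := X
  bond _ := 𝟙 X
  bond_refl _ := rfl
  bond_comp _ _ := Category.id_comp _

/-- The `J`-morphism of rudimentary systems induced by a `C`-morphism `u`. -/
def constMor (J : Type t) [Preorder J] [Nonempty J] {A B : C} (u : A ⟶ B) :
    JMor J (rud A) (rud B) where
  idx := _root_.id
  app := fun _ _ => u
  cond := by
    intro μ μ' h
    exact ⟨μ', le_refl _, le_refl _, Classical.arbitrary J, fun j _ => by simp [rud]⟩

/-- The projection `J`-morphism `X → (X_l)` of `pro^J-C`. -/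
def projMor (J : Type t) [Preorder J] [Nonempty J] {Λ : Type w} [Preorder Λ]
    (X : InvSys C Λ) (l : Λ) : JMor J X (rud (X.obj l)) where
  idx := fun _ => l
  app := fun _ _ => 𝟙 (X.obj l)
  cond := by
    intro μ μ' h
    exact ⟨l, le_refl _, le_refl _, Classical.arbitrary J, fun j _ => by simp [rud]⟩

/-- The `J`-morphism `X → (Q)` determined by a family `fs : J → (X_l ⟶ Q)`
with the constant index function at `l`. -/
def inducedMor (J : Type t) [Preorder J] [Nonempty J] {Λ : Type w} [Preorder Λ]
    (Xs : InvSys C Λ) {Q : C} (l : Λ) (fs : J → (Xs.obj l ⟶ Q)) :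
    JMor J Xs (rud Q) where
  idx := fun _ => l
  app := fun _ j => fs j
  cond := by
    intro μ μ' h
    exact ⟨l, le_refl _, le_refl _, Classical.arbitrary J, fun j _ => by simp [rud]⟩

/-- The inclusion of pro-morphisms (`J = {1}`, modelled by `PUnit`) into `J`-morphisms,
given by the constant family. -/
def indJMor (J : Type t) [Preorder J] [Nonempty J] {Λ M : Type w} [Preorder Λ] [Preorder M]
    {X : InvSys C Λ} {Y : InvSys C M} (f : JMor PUnit.{w + 1} X Y) : JMor J X Y where
  idx := f.idx
  app := fun μ _ => f.app μ PUnit.unit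
  cond := by
    intro μ μ' h
    obtain ⟨l, hl, hl', j, e⟩ := f.cond h
    exact ⟨l, hl, hl', Classical.arbitrary J, fun j' _ => e PUnit.unit (le_refl _)⟩

/-- The inclusion functor `pro-C → pro^J-C` on hom-sets. -/
def indJHom (J : Type t) [Preorder J] [IsDirected J (· ≤ ·)] [Nonempty J]
    {Λ M : Type w} [Preorder Λ] [IsDirected Λ (· ≤ ·)] [Preorder M]
    {X : InvSys C Λ} {Y : InvSys C M} (f : JHom PUnit.{w + 1} X Y) : JHom J X Y :=
  Quotient.lift (fun f => (⟦indJMor J f⟧ : JHom J X Y))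
    (fun f g hfg => Quotient.sound (fun μ => by
      obtain ⟨l, hl, hl', j, e⟩ := hfg μ
      exact ⟨l, hl, hl', Classical.arbitrary J, fun j' _ => e PUnit.unit (le_refl _)⟩)) f

/-- A `D`-expansion of an object `X` of `C` (for a full subcategory given by the
object class `D`): a pro-morphism `mor : (X) → sys` into an inverse system lying in `D`,
universal among pro-morphisms from `(X)` to inverse systems in `D`. -/
structure Expansion (D : Set C) (X : C) where
  Idx : Type w
  [pre : Preorder Idx]
  [dir : IsDirected Idx (· ≤ ·)]
  [ne : Nonempty Idx]
  sys : InvSys C Idx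
  inD : ∀ l, sys.obj l ∈ D
  mor : JHom PUnit.{w + 1} (rud X) sys
  universal : ∀ {M : Type w} [Preorder M] [IsDirected M (· ≤ ·)] [Nonempty M]
    (Y : InvSys C M), (∀ m, Y.obj m ∈ D) →
    ∀ h : JHom PUnit.{w + 1} (rud X) Y,
      ∃! g : JHom PUnit.{w + 1} sys Y, JHom.comp PUnit.{w + 1} mor g = h

attribute [instance] Expansion.pre Expansion.dir Expansion.ne

section AuxLemmas

/-- Associativity of composition in `pro^J-C`. -/
theorem jhom_comp_assoc (J : Type t) [Preorder J] [IsDirected J (· ≤ ·)] [Nonempty J]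
    {Λ M N O : Type w} [Preorder Λ] [IsDirected Λ (· ≤ ·)]
    [Preorder M] [IsDirected M (· ≤ ·)] [Preorder N] [IsDirected N (· ≤ ·)] [Preorder O]
    {X : InvSys C Λ} {Y : InvSys C M} {Z : InvSys C N} {W : InvSys C O}
    (f : JHom J X Y) (g : JHom J Y Z) (h : JHom J Z W) :
    JHom.comp J (JHom.comp J f g) h = JHom.comp J f (JHom.comp J g h) := by
  induction f using Quotient.inductionOn
  induction g using Quotient.inductionOn
  induction h using Quotient.inductionOn
  apply Quotient.sound
  intro ν
  exact ⟨_, le_refl _, le_refl _, Classical.arbitrary J, fun j' _ => by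
    simp [JMor.comp, X.bond_refl]⟩

/-- Right unit law in `pro^J-C`. -/
theorem jhom_comp_id (J : Type t) [Preorder J] [IsDirected J (· ≤ ·)] [Nonempty J]
    {Λ M : Type w} [Preorder Λ] [IsDirected Λ (· ≤ ·)]
    [Preorder M] [IsDirected M (· ≤ ·)]
    {X : InvSys C Λ} {Y : InvSys C M} (f : JHom J X Y) :
    JHom.comp J f (JHom.id J Y) = f := by
  induction f using Quotient.inductionOn
  apply Quotient.sound
  intro ν
  exact ⟨_, le_refl _, le_refl _, Classical.arbitrary J, fun j' _ => by
    simp [JMor.comp, JMor.id, X.bond_refl]⟩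

/-- Left unit law in `pro^J-C`. -/
theorem jhom_id_comp (J : Type t) [Preorder J] [IsDirected J (· ≤ ·)] [Nonempty J]
    {Λ M : Type w} [Preorder Λ] [IsDirected Λ (· ≤ ·)]
    [Preorder M] [IsDirected M (· ≤ ·)]
    {X : InvSys C Λ} {Y : InvSys C M} (f : JHom J X Y) :
    JHom.comp J (JHom.id J X) f = f := by
  induction f using Quotient.inductionOn
  apply Quotient.sound
  intro ν
  exact ⟨_, le_refl _, le_refl _, Classical.arbitrary J, fun j' _ => by
    simp [JMor.comp, JMor.id, X.bond_refl]⟩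

/-- `JIso` is symmetric. -/
theorem jiso_symm (J : Type t) [Preorder J] [IsDirected J (· ≤ ·)] [Nonempty J]
    {Λ M : Type w} [Preorder Λ] [IsDirected Λ (· ≤ ·)]
    [Preorder M] [IsDirected M (· ≤ ·)]
    {X : InvSys C Λ} {Y : InvSys C M} (h : JIso J X Y) : JIso J Y X := by
  obtain ⟨f, g, h1, h2⟩ := h
  exact ⟨g, f, h2, h1⟩

/-- `JIso` is transitive. -/
theorem jiso_trans (J : Type t) [Preorder J] [IsDirected J (· ≤ ·)] [Nonempty J]
    {Λ M N : Type w} [Preorder Λ] [IsDirected Λ (· ≤ ·)]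
    [Preorder M] [IsDirected M (· ≤ ·)] [Preorder N] [IsDirected N (· ≤ ·)]
    {X : InvSys C Λ} {Y : InvSys C M} {Z : InvSys C N}
    (h : JIso J X Y) (h' : JIso J Y Z) : JIso J X Z := by
  obtain ⟨f, f', hf1, hf2⟩ := h
  obtain ⟨g, g', hg1, hg2⟩ := h'
  refine ⟨JHom.comp J f g, JHom.comp J g' f', ?_, ?_⟩
  · rw [jhom_comp_assoc, ← jhom_comp_assoc J g g' f', hg1, jhom_id_comp, hf1]
  · rw [jhom_comp_assoc, ← jhom_comp_assoc J f' f g, hf2, jhom_id_comp, hg2]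

/-- `indJHom` preserves composition. -/
theorem indJHom_comp (J : Type t) [Preorder J] [IsDirected J (· ≤ ·)] [Nonempty J]
    {Λ M N : Type w} [Preorder Λ] [IsDirected Λ (· ≤ ·)]
    [Preorder M] [IsDirected M (· ≤ ·)] [Preorder N]
    {X : InvSys C Λ} {Y : InvSys C M} {Z : InvSys C N}
    (f : JHom PUnit.{w + 1} X Y) (g : JHom PUnit.{w + 1} Y Z) :
    indJHom J (JHom.comp PUnit.{w + 1} f g) = JHom.comp J (indJHom J f) (indJHom J g) := by
  induction f using Quotient.inductionOn
  induction g using Quotient.inductionOn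
  rfl

/-- `indJHom` preserves identities. -/
theorem indJHom_id (J : Type t) [Preorder J] [IsDirected J (· ≤ ·)] [Nonempty J]
    {Λ : Type w} [Preorder Λ] [IsDirected Λ (· ≤ ·)] (X : InvSys C Λ) :
    indJHom J (JHom.id PUnit.{w + 1} X) = JHom.id J X :=
  rfl

/-- `indJHom` preserves isomorphisms. -/
theorem isJIso_indJHom (J : Type t) [Preorder J] [IsDirected J (· ≤ ·)] [Nonempty J]
    {Λ M : Type w} [Preorder Λ] [IsDirected Λ (· ≤ ·)]
    [Preorder M] [IsDirected M (· ≤ ·)]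
    {X : InvSys C Λ} {Y : InvSys C M}
    (f : JHom PUnit.{w + 1} X Y) (hf : IsJIso PUnit.{w + 1} f) :
    IsJIso J (indJHom J f) := by
  obtain ⟨g, h1, h2⟩ := hf
  exact ⟨indJHom J g,
    by rw [← indJHom_comp, h1, indJHom_id],
    by rw [← indJHom_comp, h2, indJHom_id]⟩

/-- Isomorphic objects of `C` have `J`-isomorphic rudimentary systems. -/
theorem jiso_rud_of_iso (J : Type t) [Preorder J] [IsDirected J (· ≤ ·)] [Nonempty J]
    {P Q : C} (e : P ≅ Q) :
    JIso J (rud P : InvSys C PUnit.{w + 1}) (rud Q) := by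
  refine ⟨⟦constMor J e.hom⟧, ⟦constMor J e.inv⟧, ?_, ?_⟩
  · apply Quotient.sound
    intro μ
    exact ⟨PUnit.unit, le_refl _, le_refl _, Classical.arbitrary J, fun j' _ => by
      simp [constMor, JMor.comp, JMor.id, rud]⟩
  · apply Quotient.sound
    intro μ
    exact ⟨PUnit.unit, le_refl _, le_refl _, Classical.arbitrary J, fun j' _ => by
      simp [constMor, JMor.comp, JMor.id, rud]⟩

/-- `J`-isomorphic rudimentary systems come from isomorphic objects of `C`. -/
theorem iso_of_jiso_rud (J : Type t) [Preorder J] [IsDirected J (· ≤ ·)] [Nonempty J]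
    {P Q : C} (h : JIso J (rud P : InvSys C PUnit.{w + 1}) (rud Q)) :
    Nonempty (P ≅ Q) := by
  obtain ⟨F, G, h1, h2⟩ := h
  obtain ⟨f, rfl⟩ := Quotient.exists_rep F
  obtain ⟨g, rfl⟩ := Quotient.exists_rep G
  obtain ⟨l₁, hl₁, hl₁', j₁, E1⟩ := Quotient.exact h1 PUnit.unit
  obtain ⟨l₂, hl₂, hl₂', j₂, E2⟩ := Quotient.exact h2 PUnit.unit
  obtain ⟨j, hj1, hj2⟩ := directed_of (· ≤ ·) j₁ j₂
  have A := E1 j hj1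
  have B := E2 j hj2
  simp only [JMor.comp, JMor.id, rud, Category.id_comp, Category.comp_id] at A B
  exact ⟨⟨f.app PUnit.unit j, g.app PUnit.unit j, A, B⟩⟩

/-- The expansion morphism of an object of `D` is an isomorphism in `pro-D`. -/
theorem expansion_mor_isJIso {D : Set C} {P : C} (hP : P ∈ D) (pP : Expansion.{w} D P) :
    IsJIso PUnit.{w + 1} pP.mor := by
  obtain ⟨g, hg, -⟩ := pP.universal (rud P : InvSys C PUnit.{w + 1}) (fun _ => hP)
    (JHom.id PUnit.{w + 1} (rud P : InvSys C PUnit.{w + 1}))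
  obtain ⟨u, hu, huniq⟩ := pP.universal pP.sys pP.inD pP.mor
  have h1 := huniq (JHom.id PUnit.{w + 1} pP.sys) (jhom_comp_id PUnit.{w + 1} pP.mor)
  have h2 : JHom.comp PUnit.{w + 1} g pP.mor = u := by
    apply huniq
    show JHom.comp PUnit.{w + 1} pP.mor (JHom.comp PUnit.{w + 1} g pP.mor) = pP.mor
    rw [← jhom_comp_assoc, hg, jhom_id_comp]
  exact ⟨g, hg, h2.trans h1.symm⟩

/-- Main auxiliary lemma: for `P, Q ∈ D`, `P ≅ Q` iff the chosen `D`-expansions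
are isomorphic in `pro^J-D`, for any directed nonempty preorder `J`. -/
theorem iso_iff_jiso_expansions {D : Set C}
    (J : Type t) [Preorder J] [IsDirected J (· ≤ ·)] [Nonempty J]
    {P Q : C} (hP : P ∈ D) (hQ : Q ∈ D)
    (pP : Expansion.{w} D P) (pQ : Expansion.{w} D Q) :
    Nonempty (P ≅ Q) ↔ JIso J pP.sys pQ.sys := by
  have iP : JIso J (rud P : InvSys C PUnit.{w + 1}) pP.sys :=
    ⟨indJHom J pP.mor, isJIso_indJHom J pP.mor (expansion_mor_isJIso hP pP)⟩
  have iQ : JIso J (rud Q : InvSys C PUnit.{w + 1}) pQ.sys :=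
    ⟨indJHom J pQ.mor, isJIso_indJHom J pQ.mor (expansion_mor_isJIso hQ pQ)⟩
  constructor
  · rintro ⟨e⟩
    exact jiso_trans J (jiso_symm J iP) (jiso_trans J (jiso_rud_of_iso J e) iQ)
  · intro h
    exact iso_of_jiso_rud J (jiso_trans J iP (jiso_trans J h (jiso_symm J iQ)))

end AuxLemmas

/-- STATEMENT 15 (Theorem 5): let `D` be a full pro-reflective subcategory of `C`
(witnessed by the given expansions) and `J` a directed partially ordered set.
For `P, Q ∈ D` the following are equivalent: (i) `P ≅ Q` in `D` (equivalently in
`C`); (ii) `P` and `Q` have the same shape, i.e. their `D`-expansions are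
isomorphic in `pro-D` (the case `J = {1}`, modelled by `PUnit`); (iii) `P` and `Q`
have the same `J`-shape, i.e. their `D`-expansions are isomorphic in `pro^J-D`. -/
theorem iso_iff_shape_iff_jshape {C : Type u} [Category.{v} C]
    (D : Set C) (E : ∀ Z : C, Expansion.{w} D Z)
    (J : Type t) [PartialOrder J] [IsDirected J (· ≤ ·)] [Nonempty J]
    (P Q : C) (hP : P ∈ D) (hQ : Q ∈ D)
    (pP : Expansion.{w} D P) (pQ : Expansion.{w} D Q) :
    (Nonempty (P ≅ Q) ↔ JIso PUnit.{w + 1} pP.sys pQ.sys) ∧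
    (Nonempty (P ≅ Q) ↔ JIso J pP.sys pQ.sys) :=
  ⟨iso_iff_jiso_expansions PUnit.{w + 1} hP hQ pP pQ,
   iso_iff_jiso_expansions J hP hQ pP pQ⟩
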